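/- Let α, β > 0 and let X and Y be independent random variables with Lévy densities f_α and f_β respectively. Then the ratio X/(X+Y) has probability density function p ↦ (1 / (π √(p(1−p)))) · (αβ / (α² (1−p) + β² p)) on (0,1) with respect to Lebesgue measure. -/

import Mathlib

open MeasureTheory ProbabilityTheory Real
open Set
open scoped ENNReal

/-- The Lévy density with scale parameter `α > 0`:
`f_α(x) = (α / (2 √(π x³))) e^{-α²/(4x)}` for `x > 0`, and `0` for `x ≤ 0`. -/
noncomputable def levyDensity (α : ℝ) (x : ℝ) : ℝ :=
  if 0 < x then α / (2 * Real.sqrt (Real.pi * x ^ 3)) * Real.exp (-α ^ 2 / (4 * x)) else 0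

lemma levyDensity_nonneg {α : ℝ} (hα : 0 ≤ α) (x : ℝ) : 0 ≤ levyDensity α x := by
  unfold levyDensity
  split
  · positivity
  · exact le_refl 0

lemma levyDensity_of_nonpos {α x : ℝ} (hx : x ≤ 0) : levyDensity α x = 0 :=
  if_neg (not_lt.mpr hx)

lemma measurable_levyDensity (α : ℝ) : Measurable (levyDensity α) := by
  unfold levyDensity
  apply Measurable.ite measurableSet_Ioi <;> fun_prop

-- product of withDensity measures
lemma prod_withDensity_eq {f g : ℝ → ENNReal} [SigmaFinite (volume.withDensity f)] [SigmaFinite (volume.withDensity g)]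
    (hf : Measurable f) (hg : Measurable g) :
    (volume.withDensity f).prod (volume.withDensity g) =
      ((volume : Measure ℝ).prod volume).withDensity (fun q => f q.1 * g q.2) := by
  refine Measure.prod_eq fun s t hs ht => ?_
  rw [withDensity_apply _ (hs.prod ht), ← Measure.prod_restrict,
    lintegral_prod_mul hf.aemeasurable hg.aemeasurable,
    withDensity_apply _ hs, withDensity_apply _ ht]

-- derivative of the map T (p,s) ↦ (p s, (1-p) s)
lemma hasFDerivAt_T (q : ℝ × ℝ) :
    HasFDerivAt (fun q : ℝ × ℝ => (q.1 * q.2, (1 - q.1) * q.2))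
      (LinearMap.toContinuousLinearMap (Matrix.toLin (Module.Basis.finTwoProd ℝ) (Module.Basis.finTwoProd ℝ)
        !![q.2, q.1; -q.2, 1 - q.1])) q := by
  rw [Matrix.toLin_finTwoProd_toContinuousLinearMap]
  convert HasFDerivAt.prodMk (𝕜 := ℝ)
    ((hasFDerivAt_fst (𝕜 := ℝ) (E := ℝ) (F := ℝ)).fun_mul (hasFDerivAt_snd (𝕜 := ℝ) (E := ℝ) (F := ℝ)))
    (((hasFDerivAt_const (1:ℝ) q).sub (hasFDerivAt_fst (𝕜 := ℝ) (E := ℝ) (F := ℝ))).fun_mul (hasFDerivAt_snd (𝕜 := ℝ) (E := ℝ) (F := ℝ))) using 2 <;>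
  (try rfl) <;>
  (try simp [smul_smul, neg_mul, smul_neg, neg_smul, sub_smul, sub_eq_add_neg]) <;> module

lemma lintegral_exp_div_sq {a : ℝ} (ha : 0 < a) :
    ∫⁻ s in Ioi (0:ℝ), ENNReal.ofReal (Real.exp (-(a/s)) / s ^ 2) = ENNReal.ofReal a⁻¹ := by
  have himg : (fun t : ℝ => a / t) '' Ioi 0 = Ioi 0 := by
    ext y
    constructor
    · rintro ⟨t, ht, rfl⟩
      exact div_pos ha ht
    · intro hy
      exact ⟨a / y, div_pos ha hy, by field_simp⟩
  have hderiv : ∀ t ∈ Ioi (0:ℝ), HasFDerivWithinAt (fun t : ℝ => a / t)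
      ((1 : ℝ →L[ℝ] ℝ).smulRight (-(a / t ^ 2))) (Ioi 0) t := by
    intro t ht
    have h1 : HasDerivAt (fun t : ℝ => a / t) (-(a / t ^ 2)) t := by
      simpa [div_eq_mul_inv, mul_comm, neg_div] using (hasDerivAt_inv (ne_of_gt ht)).const_mul a
    exact h1.hasDerivWithinAt.hasFDerivWithinAt
  have hinj : InjOn (fun t : ℝ => a / t) (Ioi 0) := by
    intro x hx y hy h
    dsimp only at h
    rw [div_eq_div_iff (ne_of_gt hx) (ne_of_gt hy)] at h
    exact (mul_left_cancel₀ (ne_of_gt ha) h).symm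
  calc ∫⁻ s in Ioi (0:ℝ), ENNReal.ofReal (Real.exp (-(a/s)) / s ^ 2)
      = ∫⁻ s in (fun t : ℝ => a / t) '' Ioi 0, ENNReal.ofReal (Real.exp (-(a/s)) / s ^ 2) := by
        rw [himg]
    _ = ∫⁻ t in Ioi 0, ENNReal.ofReal |(((1 : ℝ →L[ℝ] ℝ).smulRight (-(a / t ^ 2))).det)|
          * ENNReal.ofReal (Real.exp (-(a/(a/t))) / (a/t) ^ 2) := by
        exact lintegral_image_eq_lintegral_abs_det_fderiv_mul volume measurableSet_Ioi hderiv hinj _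
    _ = ∫⁻ t in Ioi 0, ENNReal.ofReal (Real.exp (-t) * a⁻¹) := by
        apply setLIntegral_congr_fun measurableSet_Ioi
        intro t ht
        dsimp only
        have ht' : (0:ℝ) < t := ht
        rw [ContinuousLinearMap.smulRight_one_eq_toSpanSingleton, ContinuousLinearMap.det_toSpanSingleton, ← ENNReal.ofReal_mul (abs_nonneg _)]
        congr 1
        have h1 : a / (a / t) = t := by field_simp
        rw [abs_neg, abs_of_pos (by positivity), h1]
        field_simp
    _ = ENNReal.ofReal a⁻¹ := by
        have hnn : 0 ≤ a⁻¹ := by positivity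
        simp_rw [ENNReal.ofReal_mul (le_of_lt (Real.exp_pos _))]
        rw [lintegral_mul_const'' _ (by fun_prop)]
        have hint : IntegrableOn (fun t : ℝ => Real.exp (-t)) (Ioi 0) := by
          simpa using exp_neg_integrableOn_Ioi 0 zero_lt_one
        have : ∫⁻ t in Ioi (0:ℝ), ENNReal.ofReal (Real.exp (-t)) = ENNReal.ofReal 1 := by
          rw [← integral_exp_neg_Ioi_zero,
            ofReal_integral_eq_lintegral_ofReal hint (by filter_upwards with t using (Real.exp_pos _).le)]
        rw [this, ENNReal.ofReal_one, one_mul]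

lemma sqrt_pi_cube {x : ℝ} (hx : 0 ≤ x) :
    Real.sqrt (Real.pi * x ^ 3) = Real.sqrt Real.pi * (x * Real.sqrt x) := by
  rw [Real.sqrt_mul Real.pi_pos.le, show x ^ 3 = x ^ 2 * x by ring,
    Real.sqrt_mul (sq_nonneg x), Real.sqrt_sq hx]


lemma levy_prod_eq {α β p σ : ℝ} (hα : 0 < α) (hβ : 0 < β) (hp : p ∈ Ioo (0:ℝ) 1) (hσ : 0 < σ) :
    σ * (levyDensity α (p * σ) * levyDensity β ((1 - p) * σ)) =
      (α * β / (4 * Real.pi * (p * (1 - p)) * Real.sqrt (p * (1 - p)))) *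
        (Real.exp (-(((α ^ 2 * (1 - p) + β ^ 2 * p) / (4 * (p * (1 - p)))) / σ)) / σ ^ 2) := by
  obtain ⟨hp0, hp1⟩ := hp
  have h1p : (0:ℝ) < 1 - p := by linarith
  have hps : 0 < p * σ := mul_pos hp0 hσ
  have h1ps : 0 < (1 - p) * σ := mul_pos h1p hσ
  have hE : Real.exp (-α ^ 2 / (4 * (p * σ))) * Real.exp (-β ^ 2 / (4 * ((1 - p) * σ)))
      = Real.exp (-(((α ^ 2 * (1 - p) + β ^ 2 * p) / (4 * (p * (1 - p)))) / σ)) := by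
    rw [← Real.exp_add]
    congr 1
    field_simp
    ring
  rw [levyDensity, if_pos hps, levyDensity, if_pos h1ps,
    sqrt_pi_cube hps.le, sqrt_pi_cube h1ps.le,
    Real.sqrt_mul hp0.le σ, Real.sqrt_mul h1p.le σ, Real.sqrt_mul hp0.le (1-p), ← hE]
  have e1 : Real.sqrt σ * Real.sqrt σ = σ := Real.mul_self_sqrt hσ.le
  have e2 : Real.sqrt Real.pi * Real.sqrt Real.pi = Real.pi := Real.mul_self_sqrt Real.pi_pos.le
  have hv : Real.sqrt σ ≠ 0 := (Real.sqrt_pos.mpr hσ).ne'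
  have hu : Real.sqrt Real.pi ≠ 0 := (Real.sqrt_pos.mpr Real.pi_pos).ne'
  have hw : Real.sqrt p ≠ 0 := (Real.sqrt_pos.mpr hp0).ne'
  have hz : Real.sqrt (1-p) ≠ 0 := (Real.sqrt_pos.mpr h1p).ne'
  field_simp
  generalize Real.sqrt σ = v at e1 ⊢
  subst e1
  generalize Real.sqrt Real.pi = u at e2 ⊢
  generalize Real.pi = P at e2 ⊢
  rw [← e2]
  ring

lemma inner_integral {α β p : ℝ} (hα : 0 < α) (hβ : 0 < β) (hp : p ∈ Ioo (0:ℝ) 1) :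
    ∫⁻ σ in Ioi (0:ℝ), ENNReal.ofReal σ *
      (ENNReal.ofReal (levyDensity α (p * σ)) * ENNReal.ofReal (levyDensity β ((1 - p) * σ))) =
    ENNReal.ofReal (1 / (Real.pi * Real.sqrt (p * (1 - p))) *
      (α * β / (α ^ 2 * (1 - p) + β ^ 2 * p))) := by
  obtain ⟨hp0, hp1⟩ := hp
  have h1p : (0:ℝ) < 1 - p := by linarith
  set a : ℝ := (α ^ 2 * (1 - p) + β ^ 2 * p) / (4 * (p * (1 - p))) with ha_def
  set C : ℝ := α * β / (4 * Real.pi * (p * (1 - p)) * Real.sqrt (p * (1 - p))) with hC_def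
  have hD : 0 < α ^ 2 * (1 - p) + β ^ 2 * p := by positivity
  have ha : 0 < a := by rw [ha_def]; positivity
  have hC : 0 ≤ C := by rw [hC_def]; positivity
  have step1 : ∫⁻ σ in Ioi (0:ℝ), ENNReal.ofReal σ *
      (ENNReal.ofReal (levyDensity α (p * σ)) * ENNReal.ofReal (levyDensity β ((1 - p) * σ)))
      = ∫⁻ σ in Ioi (0:ℝ), ENNReal.ofReal C * ENNReal.ofReal (Real.exp (-(a/σ)) / σ ^ 2) := by
    apply setLIntegral_congr_fun measurableSet_Ioi
    intro σ hσ
    dsimp only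
    rw [← ENNReal.ofReal_mul (levyDensity_nonneg hα.le _), ← ENNReal.ofReal_mul (le_of_lt hσ),
      ← ENNReal.ofReal_mul hC]
    congr 1
    rw [← mul_assoc] at *
    calc σ * levyDensity α (p * σ) * levyDensity β ((1 - p) * σ)
        = σ * (levyDensity α (p * σ) * levyDensity β ((1 - p) * σ)) := by ring
      _ = C * (Real.exp (-(a/σ)) / σ ^ 2) := levy_prod_eq hα hβ ⟨hp0, hp1⟩ hσ
  rw [step1, lintegral_const_mul'' _ (by fun_prop), lintegral_exp_div_sq ha,
    ← ENNReal.ofReal_mul hC]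
  congr 1
  have hsq : Real.sqrt (p * (1 - p)) ≠ 0 := (Real.sqrt_pos.mpr (by positivity)).ne'
  rw [hC_def, ha_def]
  field_simp

/-- if `X` and `Y` are independent with Lévy densities `f_α` and `f_β`,
then `X / (X + Y)` has density `p ↦ (1/(π √(p(1-p)))) · (αβ / (α²(1-p) + β²p))` on `(0,1)`.
(The displayed formula vanishes outside `(0,1)`.) -/
theorem levy_ratio_density
    {Ω : Type*} [MeasurableSpace Ω] (P : Measure Ω) [IsProbabilityMeasure P]
    (α β : ℝ) (hα : 0 < α) (hβ : 0 < β)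
    (X Y : Ω → ℝ) (hX : Measurable X) (hY : Measurable Y)
    (hindep : IndepFun X Y P)
    (hXpdf : P.map X = volume.withDensity (fun x => ENNReal.ofReal (levyDensity α x)))
    (hYpdf : P.map Y = volume.withDensity (fun x => ENNReal.ofReal (levyDensity β x))) :
    P.map (fun ω => X ω / (X ω + Y ω)) =
      volume.withDensity (fun p => ENNReal.ofReal
        (1 / (Real.pi * Real.sqrt (p * (1 - p))) *
          (α * β / (α ^ 2 * (1 - p) + β ^ 2 * p)))) := by
  have hfm : Measurable (fun x => ENNReal.ofReal (levyDensity α x)) :=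
    (measurable_levyDensity α).ennreal_ofReal
  have hgm : Measurable (fun x => ENNReal.ofReal (levyDensity β x)) :=
    (measurable_levyDensity β).ennreal_ofReal
  set f : ℝ → ENNReal := fun x => ENNReal.ofReal (levyDensity α x) with hf_def
  set g : ℝ → ENNReal := fun x => ENNReal.ofReal (levyDensity β x) with hg_def
  set φ : ℝ × ℝ → ℝ := fun q => q.1 / (q.1 + q.2) with hφ_def
  have hφ : Measurable φ := measurable_fst.div (measurable_fst.add measurable_snd)
  have hFf : IsProbabilityMeasure (volume.withDensity f) := by
    rw [← hXpdf]; exact Measure.isProbabilityMeasure_map hX.aemeasurable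
  have hFg : IsProbabilityMeasure (volume.withDensity g) := by
    rw [← hYpdf]; exact Measure.isProbabilityMeasure_map hY.aemeasurable
  have hjoint : P.map (fun ω => (X ω, Y ω)) =
      ((volume : Measure ℝ).prod volume).withDensity (fun q => f q.1 * g q.2) := by
    rw [(indepFun_iff_map_prod_eq_prod_map_map hX.aemeasurable hY.aemeasurable).mp hindep,
      hXpdf, hYpdf, prod_withDensity_eq hfm hgm]
  have hmap : P.map (fun ω => X ω / (X ω + Y ω)) =
      (((volume : Measure ℝ).prod volume).withDensity (fun q => f q.1 * g q.2)).map φ := by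
    rw [show (fun ω => X ω / (X ω + Y ω)) = φ ∘ (fun ω => (X ω, Y ω)) from rfl,
      ← Measure.map_map hφ (hX.prodMk hY), hjoint]
  ext s hs
  rw [hmap, Measure.map_apply hφ hs, withDensity_apply _ (hφ hs), withDensity_apply _ hs]
  set Q : Set (ℝ × ℝ) := Ioi 0 ×ˢ Ioi 0 with hQ_def
  have hQm : MeasurableSet Q := measurableSet_Ioi.prod measurableSet_Ioi
  set T : ℝ × ℝ → ℝ × ℝ := fun q => (q.1 * q.2, (1 - q.1) * q.2) with hT_def
  set A : Set (ℝ × ℝ) := (s ∩ Ioo 0 1) ×ˢ Ioi 0 with hA_def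
  have hAm : MeasurableSet A := (hs.inter measurableSet_Ioo).prod measurableSet_Ioi
  have hF0 : ∀ q : ℝ × ℝ, q ∉ Q → f q.1 * g q.2 = 0 := by
    intro q hq
    rw [hQ_def, Set.mem_prod] at hq
    rcases not_and_or.mp hq with h | h
    · have : q.1 ≤ 0 := not_lt.mp (by simpa using h)
      rw [hf_def]
      simp [levyDensity_of_nonpos this]
    · have : q.2 ≤ 0 := not_lt.mp (by simpa using h)
      rw [hg_def]
      simp [levyDensity_of_nonpos this]
  have hrestrict : ∫⁻ q in φ ⁻¹' s, f q.1 * g q.2 ∂((volume : Measure ℝ).prod volume)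
      = ∫⁻ q in φ ⁻¹' s ∩ Q, f q.1 * g q.2 ∂((volume : Measure ℝ).prod volume) := by
    rw [← lintegral_indicator (hφ hs), ← lintegral_indicator ((hφ hs).inter hQm)]
    congr 1
    funext q
    by_cases hqs : q ∈ φ ⁻¹' s
    · by_cases hq : q ∈ Q
      · rw [indicator_of_mem hqs, indicator_of_mem (Set.mem_inter hqs hq)]
      · rw [indicator_of_mem hqs, indicator_of_notMem (fun h => hq h.2), hF0 q hq]
    · rw [indicator_of_notMem hqs, indicator_of_notMem (fun h => hqs h.1)]
  have himg : φ ⁻¹' s ∩ Q = T '' A := by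
    ext ⟨x, y⟩
    constructor
    · rintro ⟨hxs, hx, hy⟩
      simp only [mem_Ioi] at hx hy
      have hxy : 0 < x + y := by linarith
      refine ⟨(x / (x + y), x + y), ⟨⟨hxs, ?_, ?_⟩, hxy⟩, ?_⟩
      · exact div_pos hx hxy
      · rw [div_lt_one hxy]; linarith
      · show ((x / (x + y)) * (x + y), (1 - x / (x + y)) * (x + y)) = (x, y)
        have h1 : x / (x + y) * (x + y) = x := div_mul_cancel₀ x hxy.ne'
        have h2 : (1 - x / (x + y)) * (x + y) = y := by field_simp; ring
        rw [h1, h2]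
    · rintro ⟨⟨p, σ⟩, ⟨⟨hps, hp0, hp1⟩, hσ⟩, hTe⟩
      simp only [mem_Ioi] at hσ
      obtain ⟨rfl, rfl⟩ : p * σ = x ∧ (1 - p) * σ = y := by
        simpa [hT_def, Prod.ext_iff] using hTe
      have h1p : (0:ℝ) < 1 - p := by linarith
      refine ⟨?_, ?_, ?_⟩
      · show p * σ / (p * σ + (1 - p) * σ) ∈ s
        have : p * σ + (1 - p) * σ = σ := by ring
        rw [this, mul_div_assoc, div_self (ne_of_gt hσ), mul_one]
        exact hps
      · exact mul_pos hp0 hσ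
      · exact mul_pos h1p hσ
  have hinj : InjOn T A := by
    rintro ⟨p, σ⟩ ⟨-, hσ⟩ ⟨p', σ'⟩ ⟨-, hσ'⟩ h
    simp only [hT_def, Prod.mk.injEq] at h
    obtain ⟨h1, h2⟩ := h
    have hσσ : σ = σ' := by linarith [h1, h2]
    have hp : p = p' := by
      rw [hσσ] at h1
      exact mul_right_cancel₀ (ne_of_gt (show (0:ℝ) < σ' from hσσ ▸ hσ)) h1
    rw [hp, hσσ]
  set B : ℝ × ℝ → (ℝ × ℝ) →L[ℝ] (ℝ × ℝ) := fun q =>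
    LinearMap.toContinuousLinearMap (Matrix.toLin (Module.Basis.finTwoProd ℝ) (Module.Basis.finTwoProd ℝ)
      !![q.2, q.1; -q.2, 1 - q.1]) with hB_def
  have hBdet : ∀ q : ℝ × ℝ, (B q).det = q.2 := by
    intro q
    simp only [hB_def, LinearMap.det_toContinuousLinearMap, LinearMap.det_toLin,
      Matrix.det_fin_two_of]
    ring
  have hCoV : ∫⁻ q in T '' A, f q.1 * g q.2 ∂((volume : Measure ℝ).prod volume)
      = ∫⁻ q in A, ENNReal.ofReal |(B q).det| * (f ((T q).1) * g ((T q).2))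
          ∂((volume : Measure ℝ).prod volume) := by
    rw [← Measure.volume_eq_prod]
    exact lintegral_image_eq_lintegral_abs_det_fderiv_mul volume hAm
      (fun q _ => (hasFDerivAt_T q).hasFDerivWithinAt) hinj _
  have hcongr : ∫⁻ q in A, ENNReal.ofReal |(B q).det| * (f ((T q).1) * g ((T q).2))
          ∂((volume : Measure ℝ).prod volume)
      = ∫⁻ q in A, ENNReal.ofReal q.2 * (f (q.1 * q.2) * g ((1 - q.1) * q.2))
          ∂((volume : Measure ℝ).prod volume) := by
    rw [← Measure.volume_eq_prod]
    apply setLIntegral_congr_fun hAm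
    intro q hq
    dsimp only
    obtain ⟨-, hσ⟩ := hq
    rw [hBdet, abs_of_pos hσ]
  have htonelli : ∫⁻ q in A, ENNReal.ofReal q.2 * (f (q.1 * q.2) * g ((1 - q.1) * q.2))
          ∂((volume : Measure ℝ).prod volume)
      = ∫⁻ p in s ∩ Ioo 0 1, ∫⁻ σ in Ioi (0:ℝ),
          ENNReal.ofReal σ * (f (p * σ) * g ((1 - p) * σ)) := by
    rw [hA_def, ← Measure.prod_restrict]
    rw [lintegral_prod _ ?_]
    exact (measurable_snd.ennreal_ofReal.mul
      ((hfm.comp (measurable_fst.mul measurable_snd)).mul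
        (hgm.comp ((measurable_const.sub measurable_fst).mul measurable_snd)))).aemeasurable
  have hfinal : ∫⁻ p in s ∩ Ioo 0 1, (∫⁻ σ in Ioi (0:ℝ),
          ENNReal.ofReal σ * (f (p * σ) * g ((1 - p) * σ)))
      = ∫⁻ p in s, ENNReal.ofReal (1 / (Real.pi * Real.sqrt (p * (1 - p))) *
          (α * β / (α ^ 2 * (1 - p) + β ^ 2 * p))) := by
    have hstep : ∫⁻ p in s ∩ Ioo 0 1, (∫⁻ σ in Ioi (0:ℝ),
            ENNReal.ofReal σ * (f (p * σ) * g ((1 - p) * σ)))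
        = ∫⁻ p in s ∩ Ioo 0 1, ENNReal.ofReal (1 / (Real.pi * Real.sqrt (p * (1 - p))) *
            (α * β / (α ^ 2 * (1 - p) + β ^ 2 * p))) := by
      apply setLIntegral_congr_fun (hs.inter measurableSet_Ioo)
      intro p hp
      exact inner_integral hα hβ hp.2
    rw [hstep]
    have hzero : ∀ p : ℝ, p ∉ Ioo (0:ℝ) 1 →
        ENNReal.ofReal (1 / (Real.pi * Real.sqrt (p * (1 - p))) *
          (α * β / (α ^ 2 * (1 - p) + β ^ 2 * p))) = 0 := by
      intro p hp
      rw [mem_Ioo, not_and_or] at hp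
      have hple : p * (1 - p) ≤ 0 := by
        rcases hp with h | h
        · have : p ≤ 0 := not_lt.mp h
          nlinarith
        · have : 1 ≤ p := not_lt.mp h
          nlinarith
      rw [Real.sqrt_eq_zero'.mpr hple, mul_zero, div_zero, zero_mul, ENNReal.ofReal_zero]
    rw [← lintegral_indicator (hs.inter measurableSet_Ioo), ← lintegral_indicator hs]
    congr 1
    funext p
    by_cases hpss : p ∈ s
    · by_cases hpI : p ∈ Ioo (0:ℝ) 1
      · rw [indicator_of_mem (Set.mem_inter hpss hpI), indicator_of_mem hpss]
      · rw [indicator_of_notMem (fun h => hpI h.2), indicator_of_mem hpss, hzero p hpI]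
    · rw [indicator_of_notMem (fun h => hpss h.1), indicator_of_notMem hpss]
  rw [hrestrict, himg, hCoV, hcongr, htonelli, hfinal]
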